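/- Suppose c_j : ℝ → ℝ satisfy the Riccati system c_j' = c_{j+1} − (u₀/c₀) Σ_{i=0}^{j} c_i c_{j−i}, with u₀ a smooth function and c₀ nowhere zero. Then for m ∈ {0,1} and all n ≥ 1, the Hankel determinants satisfy (H^m_n)' = G^m_n − (2n−1+m) u₀ H^m_n. -/

import Mathlib

/-- Time-dependent Hankel determinant `H^m_n(t) = det(c_{i+j+m}(t))`. -/
noncomputable def Hf (c : ℕ → ℝ → ℝ) (m n : ℕ) (t : ℝ) : ℝ :=
  (Matrix.of fun i j : Fin n => c (i.val + j.val + m) t).det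

/-- `G^m_n(t)`: the Hankel determinant `H^m_n(t)` with its last row shifted
forward by one index; by convention `G^m_0 = 0`. -/
noncomputable def Gf (c : ℕ → ℝ → ℝ) (m n : ℕ) (t : ℝ) : ℝ :=
  if n = 0 then 0 else
  (Matrix.of fun i j : Fin n =>
    if i.val = n - 1 then c (m + n + j.val) t else c (i.val + j.val + m) t).det

open Matrix Finset

lemma det_row_exp {n : ℕ} (N : Matrix (Fin n) (Fin n) ℝ) :
    N.det = ∑ σ : Equiv.Perm (Fin n), ((Equiv.Perm.sign σ : ℤ) : ℝ) * ∏ i, N i (σ i) := by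
  conv_lhs => rw [← Matrix.det_transpose N, Matrix.det_apply']
  rfl

lemma hasDerivAt_det_rows {n : ℕ} (M : ℝ → Matrix (Fin n) (Fin n) ℝ)
    (M' : Matrix (Fin n) (Fin n) ℝ) (t : ℝ)
    (h : ∀ i j, HasDerivAt (fun s => M s i j) (M' i j) t) :
    HasDerivAt (fun s => (M s).det) (∑ r, ((M t).updateRow r (M' r)).det) t := by
  have H : HasDerivAt
      (fun s => ∑ σ : Equiv.Perm (Fin n), ((Equiv.Perm.sign σ : ℤ) : ℝ) * ∏ i, M s i (σ i))
      (∑ σ : Equiv.Perm (Fin n), ((Equiv.Perm.sign σ : ℤ) : ℝ) *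
        ∑ i, (∏ j ∈ Finset.univ.erase i, M t j (σ j)) • M' i (σ i)) t := by
    refine HasDerivAt.fun_sum fun σ _ => ?_
    exact (HasDerivAt.fun_finsetProd fun i _ => h i (σ i)).const_mul _
  have hfun : (fun s => (M s).det)
      = fun s => ∑ σ : Equiv.Perm (Fin n), ((Equiv.Perm.sign σ : ℤ) : ℝ) * ∏ i, M s i (σ i) :=
    funext fun s => det_row_exp _
  rw [hfun]
  convert H using 1
  simp only [smul_eq_mul, Finset.mul_sum]
  rw [Finset.sum_comm]
  refine Finset.sum_congr rfl fun r _ => ?_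
  rw [det_row_exp]
  refine Finset.sum_congr rfl fun σ _ => ?_
  rw [← Finset.mul_prod_erase Finset.univ _ (Finset.mem_univ r)]
  rw [Matrix.updateRow_self]
  have : ∀ j ∈ Finset.univ.erase r, ((M t).updateRow r (M' r)) j (σ j) = M t j (σ j) := by
    intro j hj
    exact congrFun (Matrix.updateRow_ne (Finset.ne_of_mem_erase hj)) (σ j)
  rw [Finset.prod_congr rfl this]
  ring

lemma sum_det_updateRow {n : ℕ} (A X : Matrix (Fin n) (Fin n) ℝ) :
    ∑ r, (A.updateRow r (X r)).det = Matrix.trace (X * A.adjugate) := by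
  have h1 : ∀ r : Fin n, (A.updateRow r (X r)).det = ∑ j, X r j * A.adjugate j r := by
    intro r
    rw [← Matrix.cramer_transpose_apply]
    have hx : X r = ∑ j, X r j • (Pi.single j 1 : Fin n → ℝ) := by
      funext k
      simp [Pi.single_apply]
    conv_lhs => rw [hx, map_sum]
    rw [Finset.sum_apply]
    refine Finset.sum_congr rfl fun j _ => ?_
    rw [_root_.map_smul]
    simp [Matrix.adjugate_def, smul_eq_mul]
  simp only [h1]
  rw [Matrix.trace]
  simp [Matrix.mul_apply, Matrix.diag]

lemma conv_eq (c : ℕ → ℝ) (m R J : ℕ) (hm : m ≤ 1) :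
    ∑ l ∈ Finset.range (R + J + m + 1), c l * c (R + J + m - l)
      = (∑ v ∈ Finset.range (R + 1), c (R - v) * c (v + J + m))
        + ∑ v ∈ Finset.Ico (1 - m) (J + 1), c (R + v + m) * c (J - v) := by
  have h1 : ∑ v ∈ Finset.range (R + 1), c (R - v) * c (v + J + m)
      = ∑ l ∈ Finset.range (R + 1), c l * c (R + J + m - l) := by
    rw [← Finset.sum_range_reflect (fun l => c l * c (R + J + m - l)) (R + 1)]
    refine Finset.sum_congr rfl fun v hv => ?_
    rw [Finset.mem_range] at hv
    have e2 : R + J + m - (R - v) = v + J + m := by omega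
    simp only [Nat.add_sub_cancel, e2]
  have h2 : ∑ v ∈ Finset.Ico (1 - m) (J + 1), c (R + v + m) * c (J - v)
      = ∑ l ∈ Finset.Ico (R + 1) (R + J + m + 1), c l * c (R + J + m - l) := by
    rw [Finset.sum_Ico_eq_sum_range, Finset.sum_Ico_eq_sum_range]
    have hr : J + 1 - (1 - m) = J + m := by omega
    have hr2 : R + J + m + 1 - (R + 1) = J + m := by omega
    rw [hr, hr2]
    refine Finset.sum_congr rfl fun k hk => ?_
    rw [Finset.mem_range] at hk
    have e1 : R + (1 - m + k) + m = R + 1 + k := by omega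
    have e2 : J - (1 - m + k) = R + J + m - (R + 1 + k) := by omega
    rw [e1, e2]
  rw [h1, h2, Finset.range_eq_Ico, Finset.range_eq_Ico]
  exact (Finset.sum_Ico_consecutive (fun l => c l * c (R + J + m - l)) (Nat.zero_le (R + 1))
    (by omega : R + 1 ≤ R + J + m + 1)).symm

lemma sum_range_truncate_Ico (N a b : ℕ) (h : b ≤ N) (f : ℕ → ℝ) :
    (∑ v ∈ Finset.range N, if a ≤ v ∧ v < b then f v else 0) = ∑ v ∈ Finset.Ico a b, f v := by
  have hsub : Finset.Ico a b ⊆ Finset.range N := by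
    intro x hx
    rw [Finset.mem_Ico] at hx
    exact Finset.mem_range.2 (by omega)
  rw [← Finset.sum_subset hsub (fun x _ hx =>
    if_neg (fun h' => hx (Finset.mem_Ico.2 h')))]
  exact Finset.sum_congr rfl fun x hx => if_pos (Finset.mem_Ico.1 hx)

lemma sum_range_truncate (N a : ℕ) (h : a < N) (f : ℕ → ℝ) :
    (∑ v ∈ Finset.range N, if v ≤ a then f v else 0) = ∑ v ∈ Finset.range (a + 1), f v := by
  have h1 : (∑ v ∈ Finset.range N, if v ≤ a then f v else 0)
      = ∑ v ∈ Finset.range N, if 0 ≤ v ∧ v < a + 1 then f v else 0 :=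
    Finset.sum_congr rfl fun x _ => if_congr (by omega) rfl rfl
  rw [h1, sum_range_truncate_Ico N 0 (a + 1) (by omega) f, Finset.range_eq_Ico]


theorem deriv_hankel_volterra (c : ℕ → ℝ → ℝ) (u₀ : ℝ → ℝ)
    (hc0 : ∀ t, c 0 t ≠ 0)
    (hc : ∀ j t, HasDerivAt (c j)
      (c (j + 1) t - u₀ t / c 0 t * ∑ i ∈ Finset.range (j + 1), c i t * c (j - i) t) t)
    (m : ℕ) (hm : m = 0 ∨ m = 1) (n : ℕ) (hn : 1 ≤ n) (t : ℝ) :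
    HasDerivAt (fun s => Hf c m n s)
      (Gf c m n t - ((2 * n - 1 + m : ℕ) : ℝ) * u₀ t * Hf c m n t) t := by
  classical
  have hm1 : m ≤ 1 := by rcases hm with rfl | rfl <;> omega
  set k : ℝ := u₀ t / c 0 t with hk
  set A : Matrix (Fin n) (Fin n) ℝ :=
    Matrix.of (fun i j : Fin n => c (i.val + j.val + m) t) with hA
  set Q : Matrix (Fin n) (Fin n) ℝ := Matrix.of (fun i j : Fin n =>
    ∑ l ∈ Finset.range (i.val + j.val + m + 1),
      c l t * c (i.val + j.val + m - l) t) with hQdef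
  set M' : Matrix (Fin n) (Fin n) ℝ := Matrix.of (fun i j : Fin n =>
    c (i.val + j.val + m + 1) t - k * Q i j) with hM'
  -- the derivative exists, with value the sum of row-replaced determinants
  have hder : HasDerivAt (fun s => Hf c m n s) (∑ r, (A.updateRow r (M' r)).det) t := by
    have h := hasDerivAt_det_rows
      (fun s => Matrix.of (fun i j : Fin n => c (i.val + j.val + m) s)) M' t ?_
    · exact h
    · intro i j
      have h2 := hc (i.val + j.val + m) t
      simpa [hM', hQdef] using h2
  -- identify the derivative value
  have hsplitrow : ∀ r : Fin n, (A.updateRow r (M' r)).det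
      = (A.updateRow r (fun j => c (r.val + j.val + m + 1) t)).det
        + (-k) * (A.updateRow r (Q r)).det := by
    intro r
    have hrow : M' r = (fun j : Fin n => c (r.val + j.val + m + 1) t) + (-k) • (Q r) := by
      funext j
      show c (r.val + j.val + m + 1) t - k * Q r j
        = c (r.val + j.val + m + 1) t + (-k) * Q r j
      ring
    rw [hrow, Matrix.det_updateRow_add, Matrix.det_updateRow_smul]
  -- Part A : the shifted rows sum to Gf
  have hlastlt : n - 1 < n := by omega
  have hsumA : ∑ r, (A.updateRow r (fun j => c (r.val + j.val + m + 1) t)).det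
      = Gf c m n t := by
    have hGrow : ∀ r : Fin n, r ≠ (⟨n - 1, hlastlt⟩ : Fin n) →
        (A.updateRow r (fun j => c (r.val + j.val + m + 1) t)).det = 0 := by
      intro r hr
      have hrn : r.val + 1 < n := by
        have h1 := r.isLt
        have h2 : r.val ≠ n - 1 := fun h => hr (Fin.ext h)
        omega
      have hrow : (fun j : Fin n => c (r.val + j.val + m + 1) t) = A ⟨r.val + 1, hrn⟩ := by
        funext j
        show _ = c (r.val + 1 + j.val + m) t
        congr 1
        omega
      rw [hrow]
      exact Matrix.det_updateRow_eq_zero (Fin.ne_of_val_ne (show r.val + 1 ≠ r.val by omega))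
    rw [Finset.sum_eq_single (⟨n - 1, hlastlt⟩ : Fin n) (fun r _ hr => hGrow r hr)
      (fun h => absurd (Finset.mem_univ _) h)]
    rw [Gf, if_neg (by omega : ¬ n = 0)]
    congr 1
    ext i j
    rw [Matrix.updateRow_apply]
    by_cases h : i = (⟨n - 1, hlastlt⟩ : Fin n)
    · rw [if_pos h, Matrix.of_apply, if_pos (by rw [h])]
      subst h
      show c (n - 1 + j.val + m + 1) t = c (m + n + j.val) t
      congr 1
      omega
    · rw [if_neg h, Matrix.of_apply, if_neg (fun hv => h (Fin.ext hv))]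
      rfl
  -- Part B : the quadratic rows
  set B : Matrix (Fin n) (Fin n) ℝ := Matrix.of (fun r r' : Fin n =>
    if r'.val ≤ r.val then c (r.val - r'.val) t else 0) with hBdef
  set C : Matrix (Fin n) (Fin n) ℝ := Matrix.of (fun v j : Fin n =>
    if v.val ≤ j.val ∧ 1 ≤ v.val + m then c (j.val - v.val) t else 0) with hCdef
  have hQ : Q = B * A + A * C := by
    ext r j
    rw [Matrix.add_apply, Matrix.mul_apply, Matrix.mul_apply]
    show (∑ l ∈ Finset.range (r.val + j.val + m + 1),
        c l t * c (r.val + j.val + m - l) t) = _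
    rw [conv_eq (fun i => c i t) m r.val j.val hm1]
    congr 1
    · -- B * A part
      have h1 : ∑ r' : Fin n, B r r' * A r' j
          = ∑ v ∈ Finset.range n,
            (if v ≤ r.val then c (r.val - v) t else 0) * c (v + j.val + m) t :=
        Fin.sum_univ_eq_sum_range
          (fun v => (if v ≤ r.val then c (r.val - v) t else 0) * c (v + j.val + m) t) n
      rw [h1]
      have h2 : ∀ v ∈ Finset.range n,
          (if v ≤ r.val then c (r.val - v) t else 0) * c (v + j.val + m) t
            = if v ≤ r.val then c (r.val - v) t * c (v + j.val + m) t else 0 := by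
        intro v _
        split <;> simp
      rw [Finset.sum_congr rfl h2, sum_range_truncate n r.val r.isLt]
    · -- A * C part
      have h1 : ∑ v' : Fin n, A r v' * C v' j
          = ∑ v ∈ Finset.range n, c (r.val + v + m) t
            * (if v ≤ j.val ∧ 1 ≤ v + m then c (j.val - v) t else 0) :=
        Fin.sum_univ_eq_sum_range
          (fun v => c (r.val + v + m) t
            * (if v ≤ j.val ∧ 1 ≤ v + m then c (j.val - v) t else 0)) n
      rw [h1]
      have h2 : ∀ v ∈ Finset.range n,
          c (r.val + v + m) t * (if v ≤ j.val ∧ 1 ≤ v + m then c (j.val - v) t else 0)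
            = if 1 - m ≤ v ∧ v < j.val + 1 then c (r.val + v + m) t * c (j.val - v) t
              else 0 := by
        intro v _
        rcases Nat.lt_or_ge v (j.val + 1) with hv | hv
        · rcases Nat.lt_or_ge (v + m) 1 with hv2 | hv2
          · rw [if_neg (by omega), if_neg (by omega), mul_zero]
          · rw [if_pos (by omega), if_pos (by omega)]
        · rw [if_neg (by omega), if_neg (by omega), mul_zero]
      rw [Finset.sum_congr rfl h2,
        sum_range_truncate_Ico n (1 - m) (j.val + 1) (by have := j.isLt; omega)]
  have htrB : Matrix.trace B = (n : ℝ) * c 0 t := by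
    rw [Matrix.trace]
    have : ∀ i : Fin n, Matrix.diag B i = c 0 t := by
      intro i
      show (if i.val ≤ i.val then c (i.val - i.val) t else 0) = c 0 t
      rw [if_pos le_rfl, Nat.sub_self]
    rw [Finset.sum_congr rfl (fun i _ => this i)]
    simp [Finset.card_univ, mul_comm]
  have htrC : Matrix.trace C = ((n - 1 + m : ℕ) : ℝ) * c 0 t := by
    rw [Matrix.trace]
    have h1 : ∑ i : Fin n, Matrix.diag C i
        = ∑ v ∈ Finset.range n, (if 1 ≤ v + m then c 0 t else 0) := by
      have := Fin.sum_univ_eq_sum_range (fun v => if 1 ≤ v + m then c 0 t else 0) n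
      rw [← this]
      refine Finset.sum_congr rfl fun i _ => ?_
      show (if i.val ≤ i.val ∧ 1 ≤ i.val + m then c (i.val - i.val) t else 0) = _
      rcases Nat.lt_or_ge (i.val + m) 1 with h | h
      · rw [if_neg (by omega), if_neg (by omega)]
      · rw [if_pos (by omega), if_pos h, Nat.sub_self]
    rw [h1]
    obtain ⟨n', rfl⟩ : ∃ n', n = n' + 1 := ⟨n - 1, by omega⟩
    rw [Finset.sum_range_succ']
    rcases hm with rfl | rfl
    · simp
    · simp [Finset.sum_ite_eq]
      ring
  have htrace : Matrix.trace (Q * A.adjugate)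
      = ((2 * n - 1 + m : ℕ) : ℝ) * c 0 t * A.det := by
    rw [hQ, Matrix.add_mul, Matrix.trace_add, Matrix.mul_assoc, Matrix.mul_adjugate,
      Matrix.trace_mul_cycle, Matrix.adjugate_mul, Matrix.mul_smul, Matrix.mul_one,
      Matrix.smul_mul, Matrix.one_mul, Matrix.trace_smul, Matrix.trace_smul,
      smul_eq_mul, smul_eq_mul, htrB, htrC]
    have hcast : ((2 * n - 1 + m : ℕ) : ℝ) = (n : ℝ) + ((n - 1 + m : ℕ) : ℝ) := by
      have h1 : 2 * n - 1 + m = n + (n - 1 + m) := by omega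
      rw [h1]
      push_cast
      ring
    rw [hcast]
    ring
  -- assemble
  have hval : ∑ r, (A.updateRow r (M' r)).det
      = Gf c m n t - ((2 * n - 1 + m : ℕ) : ℝ) * u₀ t * Hf c m n t := by
    rw [Finset.sum_congr rfl (fun r _ => hsplitrow r), Finset.sum_add_distrib,
      ← Finset.mul_sum, hsumA, sum_det_updateRow A Q, htrace]
    have hdet : A.det = Hf c m n t := rfl
    rw [hdet, hk]
    field_simp [hc0 t]
    ring
  rw [← hval]
  exact hder
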